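/- For φ₁(t) = min(1, t) and ς ∈ (0,∞), the convex envelope of h_ς^{(1)}(t) := inf_{τ>0}{ φ₁(1/τ)·t² + (ς²/4)·τ } equals t² for 0 ≤ t ≤ ς/2 and ς·t − ς²/4 for t ≥ ς/2. -/

import Mathlib

open Set Filter Topology

/-- `hS φ ς t = inf_{τ>0} { φ(1/τ)·t² + (ς²/4)·τ }`. -/
noncomputable def hS (φ : ℝ → ℝ) (ς t : ℝ) : ℝ :=
  sInf {y : ℝ | ∃ τ : ℝ, 0 < τ ∧ y = φ (1/τ) * t^2 + ς^2/4 * τ}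

/-- The convex lower envelope of `f` on `[0,∞)`. -/
noncomputable def convEnv (f : ℝ → ℝ) (t : ℝ) : ℝ :=
  sSup {y : ℝ | ∃ g : ℝ → ℝ, ConvexOn ℝ (Ici 0) g ∧ (∀ s ∈ Ici (0:ℝ), g s ≤ f s) ∧ y = g t}

lemma hS1_nonempty (ς t : ℝ) :
    {y : ℝ | ∃ τ : ℝ, 0 < τ ∧ y = (fun s => min 1 s) (1/τ) * t^2 + ς^2/4 * τ}.Nonempty :=
  ⟨_, 1, one_pos, rfl⟩

lemma hS1_bddBelow (ς t : ℝ) :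
    BddBelow {y : ℝ | ∃ τ : ℝ, 0 < τ ∧ y = (fun s => min 1 s) (1/τ) * t^2 + ς^2/4 * τ} := by
  refine ⟨0, ?_⟩
  rintro y ⟨τ, hτ, rfl⟩
  have h1 : (0:ℝ) ≤ min 1 (1/τ) := le_min (by norm_num) (by positivity)
  have h2 : 0 ≤ min 1 (1/τ) * t^2 := mul_nonneg h1 (sq_nonneg t)
  have h3 : 0 ≤ ς^2/4 * τ := mul_nonneg (by positivity) hτ.le
  simpa using add_nonneg h2 h3

lemma hS1_le_sq (ς t : ℝ) : hS (fun s => min 1 s) ς t ≤ t^2 := by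
  apply le_of_forall_pos_le_add
  intro ε hε
  set τ : ℝ := min 1 (4*ε/(ς^2+1)) with hτdef
  have hτ : 0 < τ := lt_min one_pos (by positivity)
  have hle : hS (fun s => min 1 s) ς t ≤ min 1 (1/τ) * t^2 + ς^2/4 * τ :=
    csInf_le (hS1_bddBelow ς t) ⟨τ, hτ, rfl⟩
  have h1 : min 1 (1/τ) * t^2 ≤ t^2 :=
    mul_le_of_le_one_left (sq_nonneg t) (min_le_left _ _)
  have h2 : ς^2/4 * τ ≤ ε := by
    have hτ2 : τ ≤ 4*ε/(ς^2+1) := min_le_right _ _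
    have h3 : ς^2/4 * τ ≤ ς^2/4 * (4*ε/(ς^2+1)) :=
      mul_le_mul_of_nonneg_left hτ2 (by positivity)
    have h4 : ς^2/4 * (4*ε/(ς^2+1)) ≤ ε := by
      rw [div_mul_div_comm, div_le_iff₀ (by positivity)]
      nlinarith [sq_nonneg ς, hε.le]
    linarith
  calc hS (fun s => min 1 s) ς t ≤ min 1 (1/τ) * t^2 + ς^2/4 * τ := hle
    _ ≤ t^2 + ε := add_le_add h1 h2

lemma hS1_le_line (ς b : ℝ) (hς : 0 < ς) (hb : ς/2 ≤ b) :
    hS (fun s => min 1 s) ς b ≤ ς*b := by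
  have hb0 : 0 < b := lt_of_lt_of_le (by linarith) hb
  have hτ : (0:ℝ) < 2*b/ς := by positivity
  have hle : hS (fun s => min 1 s) ς b ≤ min 1 (1/(2*b/ς)) * b^2 + ς^2/4 * (2*b/ς) :=
    csInf_le (hS1_bddBelow ς b) ⟨2*b/ς, hτ, rfl⟩
  have h1 : 1/(2*b/ς) = ς/(2*b) := by
    rw [one_div_div]
  have hmin : min 1 (ς/(2*b)) = ς/(2*b) := by
    apply min_eq_right
    rw [div_le_one (by positivity)]
    linarith
  rw [h1, hmin] at hle
  refine hle.trans (le_of_eq ?_)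
  field_simp
  ring

/-- The line `a*s + c` with `0 ≤ a ≤ ς` and `a² + 4c ≤ 0` is below every element. -/
lemma line_le_hS1 (ς a c : ℝ) (ha0 : 0 ≤ a) (haς : a ≤ ς) (hc : a^2 + 4*c ≤ 0)
    (s : ℝ) (hs : 0 ≤ s) : a*s + c ≤ hS (fun x => min 1 x) ς s := by
  apply le_csInf (hS1_nonempty ς s)
  rintro y ⟨τ, hτ, rfl⟩
  simp only
  rcases min_cases 1 (1/τ) with ⟨hmin, hτ1⟩ | ⟨hmin, hτ1⟩
  · rw [hmin]
    have h3 : 0 ≤ ς^2/4 * τ := mul_nonneg (by positivity) hτ.le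
    nlinarith [sq_nonneg (2*s - a)]
  · rw [hmin]
    have hkey : ς*s ≤ s^2/τ + ς^2/4*τ := by
      have h := div_nonneg (sq_nonneg (s - ς*τ/2)) hτ.le
      have heq : (s - ς*τ/2)^2/τ = s^2/τ + ς^2/4*τ - ς*s := by
        field_simp
        ring
      linarith [heq ▸ h]
    have has : a*s ≤ ς*s := mul_le_mul_of_nonneg_right haς hs
    have hc0 : c ≤ 0 := by nlinarith [sq_nonneg a]
    have : 1/τ * s^2 = s^2/τ := by ring
    rw [this]
    linarith

lemma affine_convexOn (a c : ℝ) : ConvexOn ℝ (Ici (0:ℝ)) (fun s => a*s + c) := by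
  refine ⟨convex_Ici 0, fun x _ y _ p q hp hq hpq => ?_⟩
  simp only [smul_eq_mul]
  have h : p*(a*x+c) + q*(a*y+c) = a*(p*x+q*y) + c := by linear_combination c*hpq
  exact h.ge

lemma line_mem_minorants (ς a c : ℝ) (ha0 : 0 ≤ a) (haς : a ≤ ς) (hc : a^2 + 4*c ≤ 0) (t : ℝ) :
    a*t + c ∈ {y : ℝ | ∃ g : ℝ → ℝ, ConvexOn ℝ (Ici 0) g ∧
      (∀ s ∈ Ici (0:ℝ), g s ≤ hS (fun s => min 1 s) ς s) ∧ y = g t} :=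
  ⟨fun s => a*s + c, affine_convexOn a c,
    fun s hs => line_le_hS1 ς a c ha0 haς hc s hs, rfl⟩

lemma minorants_bddAbove (ς t : ℝ) (ht : 0 ≤ t) :
    BddAbove {y : ℝ | ∃ g : ℝ → ℝ, ConvexOn ℝ (Ici 0) g ∧
      (∀ s ∈ Ici (0:ℝ), g s ≤ hS (fun s => min 1 s) ς s) ∧ y = g t} := by
  refine ⟨t^2, ?_⟩
  rintro y ⟨g, _, hg2, rfl⟩
  exact (hg2 t ht).trans (hS1_le_sq ς t)

/-- For `φ₁(t) = min(1,t)`, the convex envelope of `h_ς^{(1)}` equals `t²` for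
`0 ≤ t ≤ ς/2` and `ςt − ς²/4` for `t ≥ ς/2`. -/
theorem stmt11 (ς : ℝ) (hς : 0 < ς) :
    (∀ t : ℝ, 0 ≤ t → t ≤ ς/2 → convEnv (hS (fun s => min 1 s) ς) t = t^2) ∧
    (∀ t : ℝ, ς/2 ≤ t → convEnv (hS (fun s => min 1 s) ς) t = ς*t - ς^2/4) := by
  constructor
  · intro t ht0 htς
    apply le_antisymm
    · apply csSup_le ⟨_, line_mem_minorants ς (2*t) (-(t^2)) (by linarith) (by linarith)
        (by ring_nf; nlinarith [sq_nonneg t]) t⟩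
      rintro y ⟨g, _, hg2, rfl⟩
      exact (hg2 t ht0).trans (hS1_le_sq ς t)
    · have hmem := line_mem_minorants ς (2*t) (-(t^2)) (by linarith) (by linarith)
        (by ring_nf; nlinarith [sq_nonneg t]) t
      have := le_csSup (minorants_bddAbove ς t ht0) hmem
      calc t^2 = 2*t*t + -(t^2) := by ring
        _ ≤ _ := this
  · intro t ht
    have ht0 : 0 ≤ t := le_trans (by linarith) ht
    apply le_antisymm
    · apply csSup_le ⟨_, line_mem_minorants ς ς (-(ς^2/4)) hς.le le_rfl (by nlinarith) t⟩
      rintro y ⟨g, hg1, hg2, rfl⟩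
      -- show g t ≤ ς*t - ς^2/4
      rcases eq_or_lt_of_le ht with heq | hlt
      · have h1 : g t ≤ t^2 := (hg2 t ht0).trans (hS1_le_sq ς t)
        nlinarith [heq]
      · apply le_of_forall_pos_le_add
        intro ε hε
        set u : ℝ := t - ς/2 with hu
        have hu0 : 0 < u := by simp only [hu]; linarith
        set d : ℝ := u + ς^2*u/(4*ε) with hd
        have hd0 : 0 < d := by positivity
        have hud : u ≤ d := le_add_of_nonneg_right (by positivity)
        set b : ℝ := ς/2 + d with hb
        have hbς : ς/2 ≤ b := by simp only [hb]; linarith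
        have hlam0 : 0 ≤ u/d := by positivity
        have hlam1 : u/d ≤ 1 := div_le_one_of_le₀ hud hd0.le
        have hcomb : (1 - u/d) * (ς/2) + (u/d) * b = t := by
          rw [hb]
          field_simp
          ring_nf
          rw [hu]; ring
        have hconv := hg1.2 (mem_Ici.mpr (by positivity : (0:ℝ) ≤ ς/2))
          (mem_Ici.mpr (le_trans (by positivity) hbς)) (by linarith : (0:ℝ) ≤ 1 - u/d)
          hlam0 (by ring)
        simp only [smul_eq_mul] at hconv
        rw [hcomb] at hconv
        have gh : g (ς/2) ≤ ς^2/4 := by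
          have h1 := hg2 (ς/2) (mem_Ici.mpr (by positivity))
          have h2 := hS1_le_sq ς (ς/2)
          nlinarith
        have gb : g b ≤ ς*b :=
          (hg2 b (mem_Ici.mpr (le_trans (by positivity) hbς))).trans (hS1_le_line ς b hς hbς)
        have hεd : 4*ε*d = 4*ε*u + ς^2*u := by
          rw [hd]
          field_simp
        have key : ς^2*u/(4*d) ≤ ε := by
          rw [div_le_iff₀ (by positivity)]
          nlinarith [mul_nonneg hε.le hu0.le]
        have hident : (1 - u/d)*(ς^2/4) + (u/d)*(ς*b) = ς^2/4 + ς*u + ς^2*u/(4*d) := by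
          rw [hb]
          field_simp
          ring
        have step2 : (1 - u/d)*g (ς/2) + (u/d)*g b ≤ (1 - u/d)*(ς^2/4) + (u/d)*(ς*b) :=
          add_le_add (mul_le_mul_of_nonneg_left gh (by linarith))
            (mul_le_mul_of_nonneg_left gb hlam0)
        have htu : t = ς/2 + u := by simp [hu]
        calc g t ≤ (1 - u/d)*g (ς/2) + (u/d)*g b := hconv
          _ ≤ (1 - u/d)*(ς^2/4) + (u/d)*(ς*b) := step2
          _ = ς^2/4 + ς*u + ς^2*u/(4*d) := hident
          _ ≤ ς*t - ς^2/4 + ε := by rw [htu]; nlinarith [key]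
    · have hmem := line_mem_minorants ς ς (-(ς^2/4)) hς.le le_rfl (by nlinarith) t
      have := le_csSup (minorants_bddAbove ς t ht0) hmem
      calc ς*t - ς^2/4 = ς*t + -(ς^2/4) := by ring
        _ ≤ _ := this
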